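/- Every coherent risk estimator ρ̂ : ℝⁿ → ℝ (monotone, cash additive, positively homogeneous, subadditive) admits a representation ρ̂(x) = sup_{a ∈ M} ⟨a, -x⟩ for some nonempty set M contained in the probability simplex {a ∈ ℝⁿ : aᵢ ≥ 0, Σᵢ aᵢ = 1}. -/

import Mathlib

open Finset

/-- Every coherent risk estimator `ρ̂ : ℝⁿ → ℝ` admits a robust representation
`ρ̂(x) = sup_{a ∈ M} ⟨a, -x⟩` for some nonempty subset `M` of the probability simplex. -/
theorem coherent_risk_estimator_representation {n : ℕ} (hn : 1 ≤ n)
    (ρ : (Fin n → ℝ) → ℝ)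
    (hmono : ∀ x y : Fin n → ℝ, (∀ i, y i ≤ x i) → ρ x ≤ ρ y)
    (hcash : ∀ (x : Fin n → ℝ) (m : ℝ), ρ (fun i => x i + m) = ρ x - m)
    (hhom : ∀ (x : Fin n → ℝ) (l : ℝ), 0 ≤ l → ρ (fun i => l * x i) = l * ρ x)
    (hsub : ∀ x y : Fin n → ℝ, ρ (x + y) ≤ ρ x + ρ y) :
    ∃ M : Set (Fin n → ℝ), M.Nonempty ∧
      (∀ a ∈ M, (∀ i, 0 ≤ a i) ∧ ∑ i, a i = 1) ∧
      ∀ x, ρ x = sSup ((fun a => ∑ i, a i * (-x i)) '' M) := by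
  classical
  have hρ0 : ρ 0 = 0 := by
    have := hhom 0 0 le_rfl
    have h0 : (fun _ : Fin n => (0:ℝ)) = 0 := rfl
    simpa [h0] using this
  set N : (Fin n → ℝ) → ℝ := fun x => ρ (-x) with hNdef
  have hNs : ∀ x : Fin n → ℝ, N x = ρ (-x) := fun _ => rfl
  have N_hom : ∀ c : ℝ, 0 < c → ∀ x, N (c • x) = c * N x := by
    intro c hc x
    have h := hhom (-x) c hc.le
    have : (fun i => c * (-x) i) = -(c • x) := by
      funext i; simp [mul_comm]
    rw [hNs, hNs, ← this, h]
  have N_add : ∀ x y, N (x + y) ≤ N x + N y := by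
    intro x y
    have := hsub (-x) (-y)
    simpa [hNs, neg_add, add_comm] using this
  have N0 : N 0 = 0 := by simpa [hNs] using hρ0
  -- key existence of subgradient attaining value at z
  have key : ∀ z : Fin n → ℝ, z ≠ 0 →
      ∃ a : Fin n → ℝ, (∀ i, 0 ≤ a i) ∧ ∑ i, a i = 1 ∧
        (∀ x : Fin n → ℝ, ∑ i, a i * x i ≤ N x) ∧ ∑ i, a i * z i = N z := by
    intro z hz
    set φ : (Submodule.span ℝ ({z} : Set (Fin n → ℝ))) →ₗ[ℝ] ℝ :=
      N z • (LinearEquiv.coord ℝ (Fin n → ℝ) z hz).toLinearMap with hφ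
    have hφapp : ∀ p : Submodule.span ℝ ({z} : Set (Fin n → ℝ)),
        φ p = (LinearEquiv.coord ℝ (Fin n → ℝ) z hz) p * N z := by
      intro p; simp [hφ, mul_comm]
    have hdom : ∀ p : (⟨Submodule.span ℝ ({z} : Set (Fin n → ℝ)), φ⟩ :
        (Fin n → ℝ) →ₗ.[ℝ] ℝ).domain, φ p ≤ N p := by
      intro p
      set c := (LinearEquiv.coord ℝ (Fin n → ℝ) z hz) p with hc
      have hp : (p : Fin n → ℝ) = c • z := by
        rw [hc]; exact (LinearEquiv.coord_apply_smul ℝ (Fin n → ℝ) z hz p).symm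
      rcases lt_trichotomy c 0 with h | h | h
      · have h1 : N ((-c) • (-z)) = (-c) * N (-z) := N_hom (-c) (by linarith) (-z)
        have h2 : 0 ≤ N z + N (-z) := by
          have := N_add z (-z)
          simpa [N0] using this
        have : c * N z ≤ N (c • z) := by
          have : ((-c) • (-z) : Fin n → ℝ) = c • z := by simp
          rw [← this, h1]
          nlinarith
        rw [hφapp, ← hc, hp]; exact this
      · rw [hφapp, ← hc, hp, h]
        simp [N0]
      · rw [hφapp, ← hc, hp, N_hom c h z]
    obtain ⟨g, hg1, hg2⟩ := exists_extension_of_le_sublinear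
      ⟨Submodule.span ℝ ({z} : Set (Fin n → ℝ)), φ⟩ N N_hom N_add hdom
    refine ⟨fun i => g (Pi.single i 1), ?_, ?_, ?_, ?_⟩
    · intro i
      have h1 : g (-(Pi.single i 1)) ≤ N (-(Pi.single i 1)) := hg2 _
      have h2 : N (-(Pi.single i 1)) ≤ 0 := by
        rw [hNs, neg_neg, ← hρ0]
        exact hmono _ _ (fun j => by
          by_cases hji : j = i <;> simp [hji, Pi.single_apply])
      have := h1.trans h2
      simp only [map_neg] at this
      linarith
    · have hgx : ∀ x : Fin n → ℝ, g x = ∑ i, x i * g (Pi.single i 1) := by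
        intro x
        conv_lhs => rw [show x = ∑ i, x i • (Pi.single i 1 : Fin n → ℝ) by
          funext j; simp [Pi.single_apply, Finset.sum_apply, mul_comm]]
        rw [map_sum]
        simp [map_smul]
      have h1 : g (fun _ => (1 : ℝ)) ≤ N (fun _ => (1 : ℝ)) := hg2 _
      have h2 : g (fun _ => (-1 : ℝ)) ≤ N (fun _ => (-1 : ℝ)) := hg2 _
      have e1 : N (fun _ => (1 : ℝ)) = 1 := by
        rw [hNs]
        have : (-(fun _ => (1:ℝ)) : Fin n → ℝ) = fun i => (0:Fin n → ℝ) i + (-1) := by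
          funext i; simp
        rw [this, hcash]
        simp [hρ0]
      have e2 : N (fun _ => (-1 : ℝ)) = -1 := by
        rw [hNs]
        have : (-(fun _ => (-1:ℝ)) : Fin n → ℝ) = fun i => (0:Fin n → ℝ) i + 1 := by
          funext i; simp
        rw [this, hcash]
        simp [hρ0]
      have hneg : (fun _ => (-1:ℝ)) = -(fun _ => (1:ℝ) : Fin n → ℝ) := by funext i; simp
      rw [hgx] at h1
      rw [hneg, map_neg, hgx] at h2
      have := h1
      have h1' : ∑ i, g (Pi.single i 1) ≤ 1 := by
        rw [e1] at h1; simpa using h1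
      have e2' : N (-(fun _ => (1:ℝ) : Fin n → ℝ)) = -1 := hneg ▸ e2
      have h2' : (1:ℝ) ≤ ∑ i, g (Pi.single i 1) := by
        rw [e2'] at h2
        simp only [one_mul] at h2
        linarith
      linarith
    · intro x
      have hgx : g x = ∑ i, x i * g (Pi.single i 1) := by
        conv_lhs => rw [show x = ∑ i, x i • (Pi.single i 1 : Fin n → ℝ) by
          funext j; simp [Pi.single_apply, Finset.sum_apply, mul_comm]]
        rw [map_sum]
        simp [map_smul]
      have := hg2 x
      rw [hgx] at this
      calc ∑ i, g (Pi.single i 1) * x i = ∑ i, x i * g (Pi.single i 1) := by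
            exact Finset.sum_congr rfl (fun i _ => mul_comm _ _)
        _ ≤ N x := this
    · have hzmem : z ∈ Submodule.span ℝ ({z} : Set (Fin n → ℝ)) :=
        Submodule.mem_span_singleton_self z
      have h1 : g z = φ ⟨z, hzmem⟩ := hg1 ⟨z, hzmem⟩
      have h2 : φ ⟨z, hzmem⟩ = N z := by
        rw [hφapp]
        have : (LinearEquiv.coord ℝ (Fin n → ℝ) z hz) ⟨z, hzmem⟩ = 1 :=
          LinearEquiv.coord_self ℝ (Fin n → ℝ) z hz
        rw [this, one_mul]
      have hgx : g z = ∑ i, z i * g (Pi.single i 1) := by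
        conv_lhs => rw [show z = ∑ i, z i • (Pi.single i 1 : Fin n → ℝ) by
          funext j; simp [Pi.single_apply, Finset.sum_apply, mul_comm]]
        rw [map_sum]
        simp [map_smul]
      rw [← h2, ← h1, hgx]
      exact Finset.sum_congr rfl (fun i _ => mul_comm _ _)
  -- the set M
  set M : Set (Fin n → ℝ) :=
    {a | (∀ i, 0 ≤ a i) ∧ ∑ i, a i = 1 ∧ ∀ x : Fin n → ℝ, ∑ i, a i * x i ≤ N x} with hM
  have hone : (fun _ => (1:ℝ) : Fin n → ℝ) ≠ 0 := by
    intro h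
    have := congrFun h ⟨0, hn⟩
    norm_num at this
  have hMne : M.Nonempty := by
    obtain ⟨a, h1, h2, h3, _⟩ := key _ hone
    exact ⟨a, h1, h2, h3⟩
  refine ⟨M, hMne, fun a ha => ⟨ha.1, ha.2.1⟩, ?_⟩
  intro x
  have hbdd : ∀ r ∈ (fun a => ∑ i, a i * (-x i)) '' M, r ≤ ρ x := by
    rintro r ⟨a, ha, rfl⟩
    have := ha.2.2 (-x)
    simpa [hNs] using this
  have hne : ((fun a => ∑ i, a i * (-x i)) '' M).Nonempty := hMne.image _
  apply le_antisymm
  · -- ρ x ≤ sSup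
    by_cases hx : x = 0
    · subst hx
      obtain ⟨a, ha⟩ := hMne
      have : (0:ℝ) ∈ (fun a => ∑ i, a i * (-(0:Fin n → ℝ) i)) '' M := by
        refine ⟨a, ha, ?_⟩; simp
      rw [hρ0]
      exact le_csSup ⟨ρ 0, hbdd⟩ (by simpa using this)
    · have hnx : (-x : Fin n → ℝ) ≠ 0 := by
        intro h; exact hx (by simpa using congrArg Neg.neg h)
      obtain ⟨a, h1, h2, h3, h4⟩ := key (-x) hnx
      have hmem : ρ x ∈ (fun a => ∑ i, a i * (-x i)) '' M := by
        refine ⟨a, ⟨h1, h2, h3⟩, ?_⟩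
        show ∑ i, a i * (-x i) = ρ x
        rw [show ∑ i, a i * (-x i) = N (-x) from h4, hNs]
        simp
      exact le_csSup ⟨ρ x, hbdd⟩ hmem
  · exact csSup_le hne hbdd
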